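/- Let R = K[x_1][x_2;θ_2,δ_2]···[x_N;θ_N,δ_N] be a CGL extension whose presentation has a D-form R_D = D⟨x_1,…,x_N⟩ for a unital subring D ⊆ K. Let d ∈ D \ {0} and u, v ∈ R_D \ {0} be such that d divides uv in R_D. If the leading coefficient of v lies in D^×, then d divides u in R_D. -/

import Mathlib

open scoped Classical

namespace GYint

/-! ## Subalgebras generated by subsets of the generators -/

variable (K : Type) [Field K] {R : Type} [Ring R] [Algebra K R]

/-- The `K`-subalgebra of `R` generated by the generators `x i` with `P i`. -/
def xAdj {N : ℕ} (x : Fin N → R) (P : Fin N → Prop) : Subalgebra K R :=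
  Algebra.adjoin K {r : R | ∃ i : Fin N, P i ∧ r = x i}

/-- `R_k` : the subalgebra generated by the first `k` generators (0-indexed: indices `< k`). -/
def Rk {N : ℕ} (x : Fin N → R) (k : ℕ) : Subalgebra K R :=
  xAdj K x (fun i => (i : ℕ) < k)

/-- The interval subalgebra `R_{[a,b]}` generated by `x_a, …, x_b` (0-indexed, inclusive). -/
def Rint {N : ℕ} (x : Fin N → R) (a b : ℕ) : Subalgebra K R :=
  xAdj K x (fun i => a ≤ (i : ℕ) ∧ (i : ℕ) ≤ b)

variable {K}

/-- The ordered monomial `x^f = x_1^{f 1} ⋯ x_N^{f N}`. -/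
def oMono {N : ℕ} (x : Fin N → R) (f : Fin N → ℕ) : R :=
  ((List.finRange N).map (fun i => x i ^ f i)).prod

/-- Evaluation at `h ∈ (Kˣ)^r` of the character with exponent vector `m`. -/
def charEval {r : ℕ} (h : Fin r → Kˣ) (m : Fin r → ℤ) : Kˣ :=
  ∏ i, h i ^ m i

/-- The multiplicative bicharacter `Ω_t` on `ℤ^N` associated to a multiplicatively
skew-symmetric matrix `t`, with `Ω_t(e_j, e_k) = t j k`. -/
def omegaU {N : ℕ} (t : Fin N → Fin N → Kˣ) (f g : Fin N → ℤ) : Kˣ :=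
  ∏ p : Fin N × Fin N, t p.1 p.2 ^ (f p.1 * g p.2)

/-! ## CGL extensions (quantum nilpotent algebras) -/

/-- An iterated skew polynomial (Ore) presentation
`R = K[x_1][x_2; θ_2, δ_2] ⋯ [x_N; θ_N, δ_N]` of a `K`-algebra `R`, together with the
rational torus action data making it a CGL extension (quantum nilpotent algebra).
Here `θ k` and `δ k` are recorded as maps `R → R` whose restrictions to
`R_{k-1} = K⟨x_1,…,x_{k-1}⟩` are, respectively, a `K`-algebra automorphism (with
inverse the restriction of `θinv k`) and a `K`-linear locally nilpotent
`θ_k`-derivation; `x k * a = θ k a * x k + δ k a` for `a ∈ R_{k-1}`; the ordered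
monomials in the generators form a `K`-basis of `R` (so each `R_k` is a free left
`R_{k-1}`-module with basis the powers of `x_k`); each `x k` is an eigenvector of the
torus `H = (Kˣ)^rk` with character `chi k`; `θ k` is implemented by the torus element
`hElt k`, whose eigenvalue `lam k` on `x k` is not a root of unity, and whose
eigenvalue on `x j` (`j < k`) is `lamM k j`, the multiplicatively skew-symmetric
`λ`-matrix of the presentation. -/
structure CGLExt (K : Type) [Field K] (R : Type) [Ring R] [Algebra K R] (N : ℕ) where
  x : Fin N → R
  pbw : Module.Basis (Fin N → ℕ) K R
  pbw_eq : ∀ f, pbw f = oMono x f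
  rk : ℕ
  act : (Fin rk → Kˣ) →* (R ≃ₐ[K] R)
  chi : Fin N → Fin rk → ℤ
  eigen : ∀ (h : Fin rk → Kˣ) (k : Fin N), act h (x k) = (charEval h (chi k) : K) • x k
  θ : Fin N → R → R
  θinv : Fin N → R → R
  δ : Fin N → R → R
  θ_mem : ∀ k : Fin N, ∀ a ∈ Rk K x (k : ℕ), θ k a ∈ Rk K x (k : ℕ)
  θinv_mem : ∀ k : Fin N, ∀ a ∈ Rk K x (k : ℕ), θinv k a ∈ Rk K x (k : ℕ)
  δ_mem : ∀ k : Fin N, ∀ a ∈ Rk K x (k : ℕ), δ k a ∈ Rk K x (k : ℕ)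
  θ_linear : ∀ (k : Fin N) (s : K), ∀ a ∈ Rk K x (k : ℕ), ∀ b ∈ Rk K x (k : ℕ),
    θ k (s • a + b) = s • θ k a + θ k b
  θ_mul : ∀ k : Fin N, ∀ a ∈ Rk K x (k : ℕ), ∀ b ∈ Rk K x (k : ℕ), θ k (a * b) = θ k a * θ k b
  θ_one : ∀ k : Fin N, θ k 1 = 1
  θ_left_inv : ∀ k : Fin N, ∀ a ∈ Rk K x (k : ℕ), θinv k (θ k a) = a
  θ_right_inv : ∀ k : Fin N, ∀ a ∈ Rk K x (k : ℕ), θ k (θinv k a) = a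
  δ_linear : ∀ (k : Fin N) (s : K), ∀ a ∈ Rk K x (k : ℕ), ∀ b ∈ Rk K x (k : ℕ),
    δ k (s • a + b) = s • δ k a + δ k b
  δ_tw : ∀ k : Fin N, ∀ a ∈ Rk K x (k : ℕ), ∀ b ∈ Rk K x (k : ℕ),
    δ k (a * b) = δ k a * b + θ k a * δ k b
  ore : ∀ k : Fin N, ∀ a ∈ Rk K x (k : ℕ), x k * a = θ k a * x k + δ k a
  δ_nil : ∀ k : Fin N, ∀ a ∈ Rk K x (k : ℕ), ∃ n : ℕ, (δ k)^[n] a = 0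
  hElt : Fin N → Fin rk → Kˣ
  lam : Fin N → Kˣ
  hElt_theta : ∀ k : Fin N, ∀ a ∈ Rk K x (k : ℕ), act (hElt k) a = θ k a
  hElt_lam : ∀ k : Fin N, act (hElt k) (x k) = (lam k : K) • x k
  lam_nru : ∀ (k : Fin N) (n : ℕ), 0 < n → lam k ^ n ≠ 1
  lamM : Fin N → Fin N → Kˣ
  lamM_spec : ∀ k j : Fin N, (j : ℕ) < (k : ℕ) → act (hElt k) (x j) = (lamM k j : K) • x j
  lamM_diag : ∀ k, lamM k k = 1
  lamM_skew : ∀ k j, lamM j k = (lamM k j)⁻¹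

/-- A symmetric CGL extension: additionally `δ_k (x_j) ∈ K⟨x_{j+1},…,x_{k-1}⟩` for all
`j < k` (via the Ore relation, `δ_k(x_j) = x_k x_j - λ_{kj} x_j x_k`), and for each `j`
there is an element `h_j^*` of the torus acting on `x_k` by `λ_{kj}⁻¹` for `k > j` and
on `x_j` by an eigenvalue `λ_j^*` which is not a root of unity. -/
structure SymCGLExt (K : Type) [Field K] (R : Type) [Ring R] [Algebra K R] (N : ℕ)
    extends CGLExt K R N where
  sym_delta : ∀ j k : Fin N, (j : ℕ) < (k : ℕ) →
    x k * x j - (lamM k j : K) • (x j * x k) ∈ Rint K x ((j : ℕ) + 1) ((k : ℕ) - 1)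
  hStar : Fin N → Fin rk → Kˣ
  lamStar : Fin N → Kˣ
  hStar_spec : ∀ j k : Fin N, (j : ℕ) < (k : ℕ) →
    act (hStar j) (x k) = (((lamM k j)⁻¹ : Kˣ) : K) • x k
  hStar_lam : ∀ j : Fin N, act (hStar j) (x j) = (lamStar j : K) • x j
  lamStar_nru : ∀ (j : Fin N) (n : ℕ), 0 < n → lamStar j ^ n ≠ 1

/-- A homogeneous element (`H`-eigenvector with an integral character; `0` is allowed). -/
def IsHomog {N : ℕ} (E : CGLExt K R N) (u : R) : Prop :=
  ∃ m : Fin E.rk → ℤ, ∀ h : Fin E.rk → Kˣ, E.act h u = (charEval h m : K) • u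

/-- `p` is a normal element of the subalgebra `S` : `p S = S p`. -/
def IsNormalIn (S : Subalgebra K R) (p : R) : Prop :=
  (∀ a ∈ S, ∃ b ∈ S, p * a = b * p) ∧ (∀ a ∈ S, ∃ b ∈ S, a * p = p * b)

/-- `p` is a prime element of the subalgebra `S`: a nonzero normal element of `S`
such that `S/(p)` is a domain. -/
def IsPrimeElemIn (S : Subalgebra K R) (p : R) : Prop :=
  p ≠ 0 ∧ p ∈ S ∧ IsNormalIn S p ∧
  ∀ a b : R, a ∈ S → b ∈ S → (∃ c ∈ S, a * b = p * c) →
    (∃ c ∈ S, a = p * c) ∨ (∃ c ∈ S, b = p * c)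

/-! ## Predecessor and successor functions -/

/-- The predecessor function `p(k)` of the level sets of `η` (`⊥` playing the role of `-∞`). -/
noncomputable def predIdx {N : ℕ} {α : Type} (η : Fin N → α) (k : Fin N) : WithBot (Fin N) :=
  (Finset.univ.filter (fun j : Fin N => (j : ℕ) < (k : ℕ) ∧ η j = η k)).max

/-- The successor function `s(k)` of the level sets of `η` (`⊤` playing the role of `+∞`). -/
noncomputable def succIdx {N : ℕ} {α : Type} (η : Fin N → α) (k : Fin N) : WithTop (Fin N) :=
  (Finset.univ.filter (fun j : Fin N => (k : ℕ) < (j : ℕ) ∧ η j = η k)).min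

/-- Iterated successor `s^m(k)`. -/
noncomputable def succIter {N : ℕ} {α : Type} (η : Fin N → α) : ℕ → Fin N → WithTop (Fin N)
  | 0, k => (k : WithTop (Fin N))
  | n + 1, k => WithTop.recTopCoe ⊤ (fun j => succIdx η j) (succIter η n k)

/-- Iterated predecessor `p^m(k)`. -/
noncomputable def predIter {N : ℕ} {α : Type} (η : Fin N → α) : ℕ → Fin N → WithBot (Fin N)
  | 0, k => (k : WithBot (Fin N))
  | n + 1, k => WithBot.recBotCoe ⊥ (fun j => predIdx η j) (predIter η n k)

/-! ## The sequence of homogeneous prime elements, [GY1, Theorem 4.3] -/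

/-- The data of [GY1, Theorem 4.3] for a CGL extension `E`: a function `η : [1,N] → ℤ`,
elements `c_k ∈ R_{k-1}`, and the sequence `y_1, …, y_N` of homogeneous elements defined
by the recursion `y_k = y_{p(k)} x_k - c_k` (resp. `y_k = x_k` when `p(k) = -∞`) such that
for every `k`, `{y_j : j ≤ k, s(j) > k}` is a list of the homogeneous prime elements of
`R_k` up to scalar multiples. -/
structure YSystem {N : ℕ} (E : CGLExt K R N) where
  η : Fin N → ℤ
  y : Fin N → R
  c : Fin N → R
  c_mem : ∀ k : Fin N, c k ∈ Rk K E.x (k : ℕ)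
  y_rec : ∀ k j : Fin N, predIdx η k = (j : WithBot (Fin N)) → y k = y j * E.x k - c k
  y_base : ∀ k : Fin N, predIdx η k = ⊥ → y k = E.x k
  y_homog : ∀ k : Fin N, IsHomog E (y k)
  y_prime : ∀ k j : Fin N, (j : ℕ) ≤ (k : ℕ) →
    (∀ l : Fin N, succIdx η j = (l : WithTop (Fin N)) → (k : ℕ) < (l : ℕ)) →
    IsPrimeElemIn (Rk K E.x ((k : ℕ) + 1)) (y j)
  y_complete : ∀ (k : Fin N) (u : R), IsHomog E u →
    IsPrimeElemIn (Rk K E.x ((k : ℕ) + 1)) u →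
    ∃ j : Fin N, (j : ℕ) ≤ (k : ℕ) ∧
      (∀ l : Fin N, succIdx η j = (l : WithTop (Fin N)) → (k : ℕ) < (l : ℕ)) ∧
      ∃ t : Kˣ, u = (t : K) • y j

/-! ## Leading terms -/

/-- The reverse lexicographic order `f ≺ g` on exponent vectors. -/
def revLexLt {N : ℕ} (f g : Fin N → ℕ) : Prop :=
  ∃ n : Fin N, f n < g n ∧ ∀ m : Fin N, n < m → f m = g m

/-- `b` has leading term `t x^f` with respect to the PBW basis and `≺`. -/
def IsLeadingTerm {N : ℕ} (E : CGLExt K R N) (b : R) (t : K) (f : Fin N → ℕ) : Prop :=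
  t ≠ 0 ∧ E.pbw.repr b f = t ∧
    ∀ g : Fin N → ℕ, E.pbw.repr b g ≠ 0 → g = f ∨ revLexLt g f

/-! ## Interval prime elements of symmetric CGL extensions -/

/-- The `{0,1}`-vector (as natural numbers) supported on the `η`-chain from `a` to `b`,
i.e. on `{l : a ≤ l ≤ b, η l = η a}`; for `b = s^m(a)` this is the exponent vector of
`x_a x_{s(a)} ⋯ x_{s^m(a)}`, i.e. `e_{[a,b]}`. -/
noncomputable def chainIndN {N : ℕ} {α : Type} (η : Fin N → α) (a b : Fin N) : Fin N → ℕ :=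
  fun l => if a ≤ l ∧ l ≤ b ∧ η l = η a then 1 else 0

/-- Integer version of `chainIndN`, the vector `e_{[a,b]} ∈ ℤ^N`. -/
noncomputable def chainIndZ {N : ℕ} {α : Type} (η : Fin N → α) (a b : Fin N) : Fin N → ℤ :=
  fun l => if a ≤ l ∧ l ≤ b ∧ η l = η a then 1 else 0

/-- The standard basis vector `e_i ∈ ℤ^N`. -/
def eVecZ {N : ℕ} (i : Fin N) : Fin N → ℤ := fun l => if l = i then 1 else 0

/-- The vector `ē_j = e_j + e_{p(j)} + ⋯ + e_{p^{O_-(j)}(j)} ∈ ℤ^N`. -/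
noncomputable def ebarZ {N : ℕ} {α : Type} (η : Fin N → α) (j : Fin N) : Fin N → ℤ :=
  fun l => if l ≤ j ∧ η l = η j then 1 else 0

/-- The interval prime elements `y_{[i, s^m(i)]}` of a symmetric CGL extension
([GYbig, Theorem 5.1]): for all `i` and `m ≥ 0` with `s^m(i) ∈ [1,N]`, the element
`yI i (s^m(i))` is the unique homogeneous prime element of the interval subalgebra
`R_{[i, s^m(i)]}` with leading term `x_i x_{s(i)} ⋯ x_{s^m(i)}`. -/
structure IntervalYSystem {N : ℕ} (E : SymCGLExt K R N) (Y : YSystem E.toCGLExt) where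
  yI : Fin N → Fin N → R
  homog : ∀ i k : Fin N, IsHomog E.toCGLExt (yI i k)
  prime : ∀ (i : Fin N) (m : ℕ) (k : Fin N), succIter Y.η m i = (k : WithTop (Fin N)) →
    IsPrimeElemIn (Rint K E.x (i : ℕ) (k : ℕ)) (yI i k)
  lt : ∀ (i : Fin N) (m : ℕ) (k : Fin N), succIter Y.η m i = (k : WithTop (Fin N)) →
    IsLeadingTerm E.toCGLExt (yI i k) 1 (chainIndN Y.η i k)

/-- `y_{[j,k]}` extended by the convention `y_{[s(i), i]} = 1`. -/
def yIext {N : ℕ} (E : SymCGLExt K R N) (Y : YSystem E.toCGLExt)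
    (YI : IntervalYSystem E Y) (j k : Fin N) : R :=
  if (k : ℕ) < (j : ℕ) then 1 else YI.yI j k

/-- The normal elements `u_{[i,s^m(i)]}` of [GYbig, Corollary 5.11]: here `j = s(i)`,
`k' = s^{m-1}(i)`, `k = s^m(i)` and
`u = y_{[i,k']} y_{[j,k]} - Ω_λ(e_i, e_{[j,k']}) y_{[j,k']} y_{[i,k]}`. -/
noncomputable def uElem {N : ℕ} (E : SymCGLExt K R N) (Y : YSystem E.toCGLExt)
    (YI : IntervalYSystem E Y) (i j k' k : Fin N) : R :=
  YI.yI i k' * YI.yI j k -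
    (omegaU E.lamM (eVecZ i) (chainIndZ Y.η j k') : K) • (yIext E Y YI j k' * YI.yI i k)

/-! ## Conditions (A) and (B) and the normalization condition -/

/-- Condition (A): a choice of square roots `ν_{kl} = √λ_{kl}` in `K` such that the
subgroup of `Kˣ` they generate contains no elements of order 2. -/
structure CondA {N : ℕ} (E : CGLExt K R N) where
  ν : Fin N → Fin N → Kˣ
  sq : ∀ k j : Fin N, (j : ℕ) < (k : ℕ) → ν k j ^ 2 = E.lamM k j
  diag : ∀ k, ν k k = 1
  skew : ∀ k j, ν j k = (ν k j)⁻¹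
  no_order_two : ∀ t ∈ Subgroup.closure {u : Kˣ | ∃ k j : Fin N, u = ν k j},
    t ^ 2 = 1 → t = 1

/-- Condition (B): positive integers `d_n`, `n ∈ η([1,N])`, with
`λ_k^{d_{η(l)}} = λ_l^{d_{η(k)}}` whenever `p(k), p(l) ≠ -∞`. -/
def CondB {N : ℕ} (E : CGLExt K R N) (η : Fin N → ℤ) (d : ℤ → ℕ) : Prop :=
  (∀ k : Fin N, 0 < d (η k)) ∧
  ∀ k l : Fin N, predIdx η k ≠ ⊥ → predIdx η l ≠ ⊥ →
    E.lam k ^ d (η l) = E.lam l ^ d (η k)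

/-- The symmetrization scalar `S_ν(f) = ∏_{j<k} ν_{jk}^{-f_j f_k}`. -/
def Snu {N : ℕ} (ν : Fin N → Fin N → Kˣ) (f : Fin N → ℤ) : Kˣ :=
  ∏ p : Fin N × Fin N,
    if (p.1 : ℕ) < (p.2 : ℕ) then ν p.1 p.2 ^ (-(f p.1 * f p.2)) else 1

/-- The normalization condition (6.6) of [GYbig]: the leading coefficient
`π_{[i,s(i)]}` of `u_{[i,s(i)]}` equals `S_ν(-e_i + f_{[i,s(i)]})` for all `i` with
`s(i) ≠ +∞`, where `f_{[i,s(i)]}` is the exponent of the leading term of `u_{[i,s(i)]}`. -/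
def NormCond {N : ℕ} (E : SymCGLExt K R N) (CA : CondA E.toCGLExt)
    (Y : YSystem E.toCGLExt) (YI : IntervalYSystem E Y) : Prop :=
  ∀ i j : Fin N, succIdx Y.η i = (j : WithTop (Fin N)) →
    ∃ f : Fin N → ℕ,
      IsLeadingTerm E.toCGLExt (uElem E Y YI i j i j)
        ((Snu CA.ν (fun l => (f l : ℤ) - eVecZ i l) : Kˣ) : K) f

/-! ## D-forms -/

variable (K)

/-- `t` is a unit of the subring `D ⊆ K`. -/
def isUnitIn (D : Subring K) (t : K) : Prop := t ∈ D ∧ t ≠ 0 ∧ t⁻¹ ∈ D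

/-- The `D`-subring of `R` generated by `D` and the generators `x i` with `P i`. -/
def Dspan (D : Subring K) {N : ℕ} (x : Fin N → R) (P : Fin N → Prop) : Subring R :=
  Subring.closure ((algebraMap K R) '' (D : Set K) ∪ {r : R | ∃ i : Fin N, P i ∧ r = x i})

/-- `(R_D)_k = D⟨x_1,…,x_k⟩` (0-indexed: indices `< k`). -/
def DRk (D : Subring K) {N : ℕ} (x : Fin N → R) (k : ℕ) : Subring R :=
  Dspan K D x (fun i => (i : ℕ) < k)

/-- `R_D = D⟨x_1,…,x_N⟩`. -/
def DRfull (D : Subring K) {N : ℕ} (x : Fin N → R) : Subring R :=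
  Dspan K D x (fun _ => True)

/-- `(R_D)_{[a,b]} = D⟨x_a,…,x_b⟩` (0-indexed, inclusive). -/
def DRint (D : Subring K) {N : ℕ} (x : Fin N → R) (a b : ℕ) : Subring R :=
  Dspan K D x (fun i => a ≤ (i : ℕ) ∧ (i : ℕ) ≤ b)

variable {K}

/-- `D⟨x_1,…,x_N⟩` is a `D`-form of the CGL presentation `E`, i.e. it is an iterated
skew polynomial extension `D[x_1][x_2;θ_2,δ_2]⋯[x_N;θ_N,δ_N]`: each `θ_k` restricts
to an automorphism of `D⟨x_1,…,x_{k-1}⟩`, and each `δ_k` maps `D⟨x_1,…,x_{k-1}⟩`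
into itself. -/
structure IsDForm (D : Subring K) {N : ℕ} (E : CGLExt K R N) : Prop where
  theta_mem : ∀ k : Fin N, ∀ a ∈ Rk K E.x (k : ℕ),
    a ∈ DRk K D E.x (k : ℕ) → E.θ k a ∈ DRk K D E.x (k : ℕ)
  thetainv_mem : ∀ k : Fin N, ∀ a ∈ Rk K E.x (k : ℕ),
    a ∈ DRk K D E.x (k : ℕ) → E.θinv k a ∈ DRk K D E.x (k : ℕ)
  delta_mem : ∀ k : Fin N, ∀ a ∈ Rk K E.x (k : ℕ),
    a ∈ DRk K D E.x (k : ℕ) → E.δ k a ∈ DRk K D E.x (k : ℕ)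

/-- `D ⊆ K` has `K` as its field of fractions. -/
def IsFractionFieldOf (D : Subring K) : Prop :=
  ∀ z : K, ∃ a ∈ D, ∃ b ∈ D, b ≠ 0 ∧ z = a / b

/-- `p` is a normal element of the subring `S` : `p S = S p`. -/
def IsNormalInSR (S : Subring R) (p : R) : Prop :=
  (∀ a ∈ S, ∃ b ∈ S, p * a = b * p) ∧ (∀ a ∈ S, ∃ b ∈ S, a * p = p * b)

/-- `T` is a denominator (two-sided Ore) set in the subring `S` of the domain `R`. -/
def IsDenomSetIn (S : Subring R) (T : Submonoid R) : Prop :=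
  ((T : Set R) ⊆ (S : Set R)) ∧ (0 : R) ∉ T ∧
  (∀ a ∈ S, ∀ s ∈ T, ∃ b ∈ S, ∃ t ∈ T, t * a = b * s) ∧
  (∀ a ∈ S, ∀ s ∈ T, ∃ b ∈ S, ∃ t ∈ T, a * t = s * b)

/-! ## The permutations `Ξ_N` and `Γ_N` -/

/-- The set `Ξ_N ⊆ S_N` of permutations `σ` such that `σ([1,k])` is an interval for
all `k`. -/
def XiN {N : ℕ} : Set (Equiv.Perm (Fin N)) :=
  {σ | ∀ k a b c : Fin N, a ≤ k → b ≤ k → σ a ≤ c → c ≤ σ b → ∃ m : Fin N, m ≤ k ∧ σ m = c}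

/-- The value at position `k` (0-indexed) of the permutation
`σ_{i,j} = [i+1, …, j, i, j+1, …, N, i-1, …, 1]` (here expressed 0-indexed). -/
def gammaVal (N i j : ℕ) (k : Fin N) : ℕ :=
  if (k : ℕ) < j - i then i + 1 + (k : ℕ)
  else if (k : ℕ) = j - i then i
  else if (k : ℕ) ≤ N - 1 - i then (k : ℕ) + i
  else N - 1 - (k : ℕ)

/-- The subset `Γ_N = {σ_{i,j} : i ≤ j} ⊆ Ξ_N`. -/
def GammaN {N : ℕ} : Set (Equiv.Perm (Fin N)) :=
  {σ | ∃ i j : ℕ, i ≤ j ∧ j < N ∧ ∀ k : Fin N, (σ k : ℕ) = gammaVal N i j k}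

/-! ## Auxiliary development for the proof -/

section Aux

noncomputable instance rlLO {N : ℕ} : LinearOrder (Lex ((_ : Fin N) → ℕ)) :=
  @Pi.Lex.linearOrder (Fin N) (fun _ => ℕ) inferInstance
    (inferInstance : WellFoundedLT (Fin N)) inferInstance

def rl {N : ℕ} (f : Fin N → ℕ) : Lex ((_ : Fin N) → ℕ) := toLex (fun i => f i.rev)

lemma rl_inj {N : ℕ} {f g : Fin N → ℕ} (h : rl f = rl g) : f = g := by
  funext l
  have := congrFun (congrArg ofLex h) l.rev
  simpa [rl] using this

lemma revLexLt_iff {N : ℕ} {f g : Fin N → ℕ} : revLexLt f g ↔ rl f < rl g := by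
  constructor
  · rintro ⟨n, hn, hm⟩
    refine ⟨n.rev, fun j hj => ?_, by simpa [rl] using hn⟩
    have : n < j.rev := Fin.lt_rev_iff.1 hj
    simp [rl, hm _ this]
  · rintro ⟨i, hj, hi⟩
    refine ⟨i.rev, by simpa [rl] using hi, fun m hm => ?_⟩
    have : m.rev < i := by
      rw [← Fin.rev_rev i]; exact Fin.rev_lt_rev.mpr hm
    have := hj m.rev this
    simpa [rl] using this

lemma revLex_trans {N : ℕ} {f g h : Fin N → ℕ} (h1 : revLexLt f g) (h2 : revLexLt g h) :
    revLexLt f h := by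
  rw [revLexLt_iff] at *; exact lt_trans h1 h2

lemma revLex_irrefl {N : ℕ} (f : Fin N → ℕ) : ¬ revLexLt f f := by
  rw [revLexLt_iff]; exact lt_irrefl _

lemma revLex_add_right {N : ℕ} {f g : Fin N → ℕ} (h : revLexLt f g) (c : Fin N → ℕ) :
    revLexLt (f + c) (g + c) := by
  obtain ⟨n, hn, hm⟩ := h
  exact ⟨n, by simpa using Nat.add_lt_add_right hn (c n), fun m hm' => by simp [hm m hm']⟩

lemma revLex_zero_high {N : ℕ} {h e : Fin N → ℕ} (hlt : revLexLt h e) {c : ℕ}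
    (he : ∀ l : Fin N, c ≤ (l : ℕ) → e l = 0) : ∀ l : Fin N, c ≤ (l : ℕ) → h l = 0 := by
  obtain ⟨n, hn, hm⟩ := hlt
  intro l hl
  have hnc : (n : ℕ) < c := by
    by_contra hcon
    have := he n (le_of_not_gt hcon)
    omega
  have hnl : n < l := by
    have : (n : ℕ) < (l : ℕ) := lt_of_lt_of_le hnc hl
    exact this
  rw [hm l hnl]; exact he l hl

lemma exists_revLex_max {N : ℕ} (s : Finset (Fin N → ℕ)) (hs : s.Nonempty) :
    ∃ f ∈ s, ∀ g ∈ s, g = f ∨ revLexLt g f := by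
  obtain ⟨f, hf, hmax⟩ := Finset.exists_max_image s rl hs
  refine ⟨f, hf, fun g hg => ?_⟩
  rcases lt_or_eq_of_le (hmax g hg) with h | h
  · exact Or.inr (revLexLt_iff.2 h)
  · exact Or.inl (rl_inj h)

variable {K : Type} [Field K] {R : Type} [Ring R] [Algebra K R] {N : ℕ}

/-! ### Monomial lemmas -/

lemma oMono_mem_xAdj (x : Fin N → R) (P : Fin N → Prop) (f : Fin N → ℕ)
    (hf : ∀ j, f j ≠ 0 → P j) : oMono x f ∈ xAdj K x P := by
  refine list_prod_mem (fun r hr => ?_)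
  obtain ⟨j, _, rfl⟩ := List.mem_map.1 hr
  by_cases h0 : f j = 0
  · rw [h0, pow_zero]; exact one_mem _
  · have hx : x j ∈ {r : R | ∃ i : Fin N, P i ∧ r = x i} := ⟨j, hf j h0, rfl⟩
    exact pow_mem (Algebra.subset_adjoin hx) _

lemma oMono_mem_Dspan (D : Subring K) (x : Fin N → R) (P : Fin N → Prop) (f : Fin N → ℕ)
    (hf : ∀ j, f j ≠ 0 → P j) : oMono x f ∈ Dspan K D x P := by
  refine list_prod_mem (fun r hr => ?_)
  obtain ⟨j, _, rfl⟩ := List.mem_map.1 hr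
  by_cases h0 : f j = 0
  · rw [h0, pow_zero]; exact one_mem _
  · have hx : x j ∈ (algebraMap K R) '' (D : Set K) ∪ {r : R | ∃ i : Fin N, P i ∧ r = x i} :=
      Or.inr ⟨j, hf j h0, rfl⟩
    exact pow_mem (Subring.subset_closure hx) _

lemma finRange_split {N : ℕ} (k : Fin N) :
    ∃ L₁ L₂ : List (Fin N), List.finRange N = L₁ ++ k :: L₂ ∧
      (∀ a ∈ L₁, a < k) ∧ (∀ a ∈ L₂, k < a) := by
  obtain ⟨L₁, L₂, hL⟩ := List.append_of_mem (List.mem_finRange k)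
  have hp := List.pairwise_lt_finRange N
  rw [hL, List.pairwise_append] at hp
  obtain ⟨_, hp2, hp3⟩ := hp
  refine ⟨L₁, L₂, hL, fun a ha => hp3 a ha k (List.mem_cons_self), fun a ha => ?_⟩
  exact (List.pairwise_cons.1 hp2).1 a ha

lemma oMono_split (x : Fin N → R) (k : Fin N) (f : Fin N → ℕ)
    (hf : ∀ l : Fin N, (k : ℕ) < (l : ℕ) → f l = 0) :
    oMono x f = oMono x (Function.update f k 0) * x k ^ f k := by
  obtain ⟨L₁, L₂, hL, h1, h2⟩ := finRange_split k
  have key : ∀ (φ : Fin N → R), (∀ a ∈ L₂, φ a = 1) →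
      ((L₁ ++ k :: L₂).map φ).prod = (L₁.map φ).prod * φ k := by
    intro φ hφ
    rw [List.map_append, List.prod_append, List.map_cons, List.prod_cons]
    have : (L₂.map φ).prod = 1 := by
      apply List.prod_eq_one
      intro r hr
      obtain ⟨a, ha, rfl⟩ := List.mem_map.1 hr
      exact hφ a ha
    rw [this, mul_one]
  unfold oMono
  rw [hL, key _ (fun a ha => by rw [hf a (h2 a ha), pow_zero]),
    key _ (fun a ha => by rw [Function.update_of_ne (ne_of_gt (h2 a ha)) , hf a (h2 a ha), pow_zero])]
  have hmap : L₁.map (fun i => x i ^ f i) = L₁.map (fun i => x i ^ (Function.update f k 0) i) := by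
    apply List.map_congr_left
    intro a ha
    rw [Function.update_of_ne (ne_of_lt (h1 a ha))]
  rw [hmap, Function.update_self, pow_zero, mul_one]

lemma oMono_zero (x : Fin N → R) : oMono x (0 : Fin N → ℕ) = 1 := by
  apply List.prod_eq_one
  intro r hr
  obtain ⟨a, _, rfl⟩ := List.mem_map.1 hr
  simp

lemma oMono_single (x : Fin N → R) (j : Fin N) : oMono x (Pi.single j 1) = x j := by
  rw [oMono_split x j _ (fun l hl => Pi.single_eq_of_ne (by exact fun h => by subst h; exact lt_irrefl _ hl) _)]
  have : Function.update (Pi.single j 1 : Fin N → ℕ) j 0 = 0 := by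
    funext l
    by_cases h : l = j
    · subst h; simp
    · simp [Function.update_of_ne h, Pi.single_eq_of_ne h]
  rw [this, oMono_zero, one_mul, Pi.single_eq_same, pow_one]

end Aux

section Aux2

variable {K : Type} [Field K] {R : Type} [Ring R] [Algebra K R] {N : ℕ}
variable (E : CGLExt K R N) (D : Subring K)

/-- The elements of `R` all of whose PBW coordinates lie in `D`, and whose PBW support only
involves the generators `x_l` with `l < k`. -/
def okc (k : ℕ) : AddSubgroup R where
  carrier := {r | (∀ f, E.pbw.repr r f ∈ D) ∧
    ∀ f, E.pbw.repr r f ≠ 0 → ∀ l : Fin N, k ≤ (l : ℕ) → f l = 0}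
  zero_mem' := by
    constructor
    · intro f; rw [map_zero]; simpa using zero_mem D
    · intro f hf; rw [map_zero] at hf; simp at hf
  add_mem' := by
    rintro a b ⟨ha1, ha2⟩ ⟨hb1, hb2⟩
    refine ⟨fun f => by rw [map_add]; exact add_mem (ha1 f) (hb1 f), fun f hf l hl => ?_⟩
    rw [map_add, Finsupp.add_apply] at hf
    by_cases h : E.pbw.repr a f = 0
    · exact hb2 f (fun h' => hf (by rw [h, h', add_zero])) l hl
    · exact ha2 f h l hl
  neg_mem' := by
    rintro a ⟨ha1, ha2⟩
    refine ⟨fun f => by rw [map_neg]; exact neg_mem (ha1 f), fun f hf l hl => ?_⟩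
    rw [map_neg, Finsupp.neg_apply, neg_ne_zero] at hf
    exact ha2 f hf l hl

lemma okc_coords {k : ℕ} {r : R} (h : r ∈ okc E D k) (f : Fin N → ℕ) : E.pbw.repr r f ∈ D :=
  h.1 f

lemma okc_supp {k : ℕ} {r : R} (h : r ∈ okc E D k) {f : Fin N → ℕ}
    (hf : E.pbw.repr r f ≠ 0) : ∀ l : Fin N, k ≤ (l : ℕ) → f l = 0 :=
  h.2 f hf

lemma okc_smul {k : ℕ} {r : R} {c : K} (hc : c ∈ D) (h : r ∈ okc E D k) :
    c • r ∈ okc E D k := by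
  refine ⟨fun f => ?_, fun f hf l hl => ?_⟩
  · rw [map_smul, Finsupp.smul_apply, smul_eq_mul]; exact mul_mem hc (h.1 f)
  · rw [map_smul, Finsupp.smul_apply, smul_eq_mul] at hf
    exact h.2 f (fun h' => hf (by rw [h', mul_zero])) l hl

lemma okc_pbw {k : ℕ} {f : Fin N → ℕ} (hf : ∀ l : Fin N, k ≤ (l : ℕ) → f l = 0) :
    E.pbw f ∈ okc E D k := by
  refine ⟨fun g => ?_, fun g hg l hl => ?_⟩
  · rw [E.pbw.repr_self, Finsupp.single_apply]
    split
    · exact one_mem _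
    · exact zero_mem _
  · rw [E.pbw.repr_self, Finsupp.single_apply] at hg
    split at hg
    · next h => subst h; exact hf l hl
    · exact absurd rfl hg

lemma pbw_zero : E.pbw (0 : Fin N → ℕ) = 1 := by rw [E.pbw_eq, oMono_zero]

lemma pbw_single (j : Fin N) : E.pbw (Pi.single j 1) = E.x j := by
  rw [E.pbw_eq, oMono_single]

lemma okc_one {k : ℕ} : (1 : R) ∈ okc E D k := by
  rw [← pbw_zero E]
  exact okc_pbw E D (fun l _ => rfl)

lemma okc_algebraMap {k : ℕ} {c : K} (hc : c ∈ D) : algebraMap K R c ∈ okc E D k := by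
  rw [Algebra.algebraMap_eq_smul_one]
  exact okc_smul E D hc (okc_one E D)

lemma okc_x {k : ℕ} {j : Fin N} (hj : (j : ℕ) < k) : E.x j ∈ okc E D k := by
  rw [← pbw_single E j]
  refine okc_pbw E D (fun l hl => Pi.single_eq_of_ne (fun h => ?_) _)
  subst h; omega

lemma repr_sum_eq (r : R) : (E.pbw.repr r).sum (fun f c => c • E.pbw f) = r := by
  have := E.pbw.linearCombination_repr r
  rwa [Finsupp.linearCombination_apply] at this

lemma okc_mem_Rk {k : ℕ} {r : R} (h : r ∈ okc E D k) : r ∈ Rk K E.x k := by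
  rw [← repr_sum_eq E r, Finsupp.sum]
  refine sum_mem (fun f hf => ?_)
  refine Subalgebra.smul_mem _ ?_ _
  rw [E.pbw_eq]
  refine oMono_mem_xAdj E.x _ f (fun j hj => ?_)
  by_contra hcon
  exact hj (h.2 f (Finsupp.mem_support_iff.1 hf) j (le_of_not_gt hcon))

lemma okc_mem_Dspan {k : ℕ} {r : R} {P : Fin N → Prop} (hP : ∀ j : Fin N, (j : ℕ) < k → P j)
    (h : r ∈ okc E D k) : r ∈ Dspan K D E.x P := by
  rw [← repr_sum_eq E r, Finsupp.sum]
  refine sum_mem (fun f hf => ?_)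
  rw [Algebra.smul_def]
  refine mul_mem (Subring.subset_closure (Or.inl ⟨_, h.1 f, rfl⟩)) ?_
  rw [E.pbw_eq]
  refine oMono_mem_Dspan D E.x _ f (fun j hj => hP j ?_)
  by_contra hcon
  exact hj (h.2 f (Finsupp.mem_support_iff.1 hf) j (le_of_not_gt hcon))

lemma okc_mem_DRk {k : ℕ} {r : R} (h : r ∈ okc E D k) : r ∈ DRk K D E.x k :=
  okc_mem_Dspan E D (fun _ hj => hj) h

lemma okc_finsuppSum {k : ℕ} {X : Type} (s : X →₀ K) (F : X → K → R)
    (h : ∀ x ∈ s.support, F x (s x) ∈ okc E D k) : s.sum F ∈ okc E D k := by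
  rw [Finsupp.sum]
  exact sum_mem h

/-! ### The eigenvalue scalars -/

/-- `∏_j λ_{kj}^{f j}`. -/
def LamK (k : Fin N) (f : Fin N → ℕ) : K :=
  ((List.finRange N).map (fun j => ((E.lamM k j : Kˣ) : K) ^ f j)).prod

/-- `∏_j λ_{kj}^{-f j}`. -/
def LamKi (k : Fin N) (f : Fin N → ℕ) : K :=
  ((List.finRange N).map (fun j => (((E.lamM k j)⁻¹ : Kˣ) : K) ^ f j)).prod

lemma LamK_mul_inv (k : Fin N) (f : Fin N → ℕ) : LamK E k f * LamKi E k f = 1 := by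
  rw [LamK, LamKi, ← List.prod_map_mul]
  apply List.prod_eq_one
  intro r hr
  obtain ⟨j, _, rfl⟩ := List.mem_map.1 hr
  rw [← mul_pow]
  norm_cast
  rw [mul_inv_cancel, one_pow]
  rfl

lemma LamK_mem {k : Fin N} {f : Fin N → ℕ} (hl : ∀ j : Fin N, f j ≠ 0 → (E.lamM k j : K) ∈ D) :
    LamK E k f ∈ D := by
  refine list_prod_mem (fun r hr => ?_)
  obtain ⟨j, _, rfl⟩ := List.mem_map.1 hr
  by_cases h0 : f j = 0
  · rw [h0, pow_zero]; exact one_mem _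
  · exact pow_mem (hl j h0) _

lemma LamKi_mem {k : Fin N} {f : Fin N → ℕ}
    (hl : ∀ j : Fin N, f j ≠ 0 → (((E.lamM k j)⁻¹ : Kˣ) : K) ∈ D) : LamKi E k f ∈ D := by
  refine list_prod_mem (fun r hr => ?_)
  obtain ⟨j, _, rfl⟩ := List.mem_map.1 hr
  by_cases h0 : f j = 0
  · rw [h0, pow_zero]; exact one_mem _
  · exact pow_mem (hl j h0) _

lemma isUnitIn_mul {t s : K} (ht : isUnitIn K D t) (hs : isUnitIn K D s) :
    isUnitIn K D (t * s) := by
  obtain ⟨ht1, ht2, ht3⟩ := ht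
  obtain ⟨hs1, hs2, hs3⟩ := hs
  exact ⟨mul_mem ht1 hs1, mul_ne_zero ht2 hs2, by rw [mul_inv]; exact mul_mem ht3 hs3⟩

lemma isUnitIn_one : isUnitIn K D (1 : K) :=
  ⟨one_mem _, one_ne_zero, by rw [inv_one]; exact one_mem _⟩

lemma isUnitIn_pow {t : K} (ht : isUnitIn K D t) (n : ℕ) : isUnitIn K D (t ^ n) := by
  induction n with
  | zero => simpa using isUnitIn_one D
  | succ n ih => rw [pow_succ]; exact isUnitIn_mul D ih ht

lemma isUnitIn_LamK {k : Fin N} {f : Fin N → ℕ}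
    (hl : ∀ j : Fin N, f j ≠ 0 → (E.lamM k j : K) ∈ D ∧ (((E.lamM k j)⁻¹ : Kˣ) : K) ∈ D) :
    isUnitIn K D (LamK E k f) := by
  have hmul := LamK_mul_inv E k f
  refine ⟨LamK_mem E D (fun j hj => (hl j hj).1), fun h0 => by simp [h0] at hmul, ?_⟩
  rw [inv_eq_of_mul_eq_one_right hmul]
  exact LamKi_mem E D (fun j hj => (hl j hj).2)

lemma list_prod_smul {ι : Type} (L : List ι) (c : ι → K) (φ : ι → R) :
    (L.map fun i => c i • φ i).prod = (L.map c).prod • (L.map φ).prod := by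
  induction L with
  | nil => simp
  | cons a t ih =>
    rw [List.map_cons, List.prod_cons, ih, List.map_cons, List.prod_cons, List.map_cons,
      List.prod_cons, smul_mul_smul_comm]

lemma pbw_mem_Rk {k : ℕ} {f : Fin N → ℕ} (hf : ∀ l : Fin N, k ≤ (l : ℕ) → f l = 0) :
    E.pbw f ∈ Rk K E.x k := by
  rw [E.pbw_eq]
  refine oMono_mem_xAdj E.x _ f (fun j hj => ?_)
  by_contra hcon
  exact hj (hf j (le_of_not_gt hcon))

lemma act_pbw (k : Fin N) {f : Fin N → ℕ} (hf : ∀ l : Fin N, (k : ℕ) ≤ (l : ℕ) → f l = 0) :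
    E.act (E.hElt k) (E.pbw f) = LamK E k f • E.pbw f := by
  rw [E.pbw_eq, oMono, map_list_prod, List.map_map]
  have hpt : ∀ j : Fin N, (E.act (E.hElt k)) (E.x j ^ f j) =
      (((E.lamM k j : Kˣ) : K) ^ f j) • (E.x j ^ f j) := by
    intro j
    by_cases h0 : f j = 0
    · rw [h0, pow_zero, map_one, pow_zero, one_smul]
    · have hjk : (j : ℕ) < (k : ℕ) := by
        by_contra hcon
        exact h0 (hf j (le_of_not_gt hcon))
      rw [map_pow, E.lamM_spec k j hjk, smul_pow]
  have : (List.finRange N).map ((E.act (E.hElt k)) ∘ fun i => E.x i ^ f i) =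
      (List.finRange N).map (fun i => (((E.lamM k i : Kˣ) : K) ^ f i) • (E.x i ^ f i)) := by
    apply List.map_congr_left
    intro a _
    exact hpt a
  rw [this, list_prod_smul]
  rfl

lemma theta_pbw (k : Fin N) {f : Fin N → ℕ} (hf : ∀ l : Fin N, (k : ℕ) ≤ (l : ℕ) → f l = 0) :
    E.θ k (E.pbw f) = LamK E k f • E.pbw f := by
  rw [← E.hElt_theta k _ (pbw_mem_Rk E hf), act_pbw E k hf]

lemma theta_okc {k : Fin N} {r : R}
    (hlamD : ∀ j : Fin N, (j : ℕ) < (k : ℕ) → (E.lamM k j : K) ∈ D)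
    (h : r ∈ okc E D (k : ℕ)) : E.θ k r ∈ okc E D (k : ℕ) := by
  rw [← E.hElt_theta k r (okc_mem_Rk E D h)]
  have hexp : E.act (E.hElt k) r =
      (E.pbw.repr r).sum fun f c => c • E.act (E.hElt k) (E.pbw f) := by
    conv_lhs => rw [← repr_sum_eq E r]
    rw [map_finsuppSum]
    exact Finsupp.sum_congr (fun f _ => map_smul _ _ _)
  rw [hexp]
  refine okc_finsuppSum E D _ _ (fun f hf => ?_)
  have hsupp : ∀ l : Fin N, (k : ℕ) ≤ (l : ℕ) → f l = 0 :=
    h.2 f (Finsupp.mem_support_iff.1 hf)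
  rw [act_pbw E k hsupp, smul_smul]
  refine okc_smul E D (mul_mem (h.1 f) (LamK_mem E D (fun j hj => hlamD j ?_))) (okc_pbw E D hsupp)
  by_contra hcon
  exact hj (hsupp j (le_of_not_gt hcon))

lemma delta_okc {k : Fin N} {r : R} (hD : IsDForm D E)
    (HL : ∀ r ∈ DRk K D E.x (k : ℕ), r ∈ okc E D (k : ℕ))
    (h : r ∈ okc E D (k : ℕ)) : E.δ k r ∈ okc E D (k : ℕ) :=
  HL _ (hD.delta_mem k r (okc_mem_Rk E D h) (okc_mem_DRk E D h))

/-! ### Shift lemmas -/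

lemma pbw_mul_xpow (k : Fin N) {h : Fin N → ℕ} (hh : ∀ l : Fin N, (k : ℕ) ≤ (l : ℕ) → h l = 0)
    (m : ℕ) : E.pbw h * E.x k ^ m = E.pbw (h + (Pi.single k m : Fin N → ℕ)) := by
  have hf : ∀ l : Fin N, (k : ℕ) < (l : ℕ) → (h + (Pi.single k m : Fin N → ℕ)) l = 0 := by
    intro l hl
    have h1 : h l = 0 := hh l (le_of_lt hl)
    have h2 : (Pi.single k m : Fin N → ℕ) l = 0 :=
      Pi.single_eq_of_ne (fun hc => by subst hc; omega) _
    simp [h1, h2]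
  rw [E.pbw_eq, E.pbw_eq, oMono_split E.x k _ hf]
  have hupd : Function.update (h + (Pi.single k m : Fin N → ℕ)) k 0 = h := by
    funext l
    by_cases hc : l = k
    · subst hc; simp [hh l le_rfl]
    · simp [Function.update_of_ne hc, Pi.single_eq_of_ne hc]
  have hk : (h + (Pi.single k m : Fin N → ℕ)) k = m := by simp [hh k le_rfl]
  rw [hupd, hk]

/-- evaluation of the PBW coordinate at `h`. -/
noncomputable def evalAt (h : Fin N → ℕ) : R →ₗ[K] K := (Finsupp.lapply h).comp E.pbw.repr.toLinearMap

lemma evalAt_apply (h : Fin N → ℕ) (r : R) : evalAt E h r = E.pbw.repr r h := rfl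

lemma shift_coords {k : Fin N} {c : R} (hc : c ∈ okc E D (k : ℕ)) (m : ℕ) (h' : Fin N → ℕ) :
    E.pbw.repr (c * E.x k ^ m) h' =
      if h' k = m then E.pbw.repr c (Function.update h' k 0) else 0 := by
  have hexp : c * E.x k ^ m = (E.pbw.repr c).sum fun f t => t • E.pbw (f + Pi.single k m) := by
    conv_lhs => rw [← repr_sum_eq E c]
    rw [Finsupp.sum_mul]
    apply Finsupp.sum_congr
    intro f hf
    rw [smul_mul_assoc, pbw_mul_xpow E k (hc.2 f (Finsupp.mem_support_iff.1 hf)) m]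
  have : E.pbw.repr (c * E.x k ^ m) h' = evalAt E h' (c * E.x k ^ m) := rfl
  rw [this, hexp, map_finsuppSum]
  have hterm : ∀ f ∈ (E.pbw.repr c).support,
      evalAt E h' ((E.pbw.repr c f) • E.pbw (f + Pi.single k m)) =
        if f + Pi.single k m = h' then E.pbw.repr c f else 0 := by
    intro f _
    rw [map_smul, evalAt_apply, E.pbw.repr_self, Finsupp.single_apply, smul_eq_mul]
    split <;> simp
  rw [Finsupp.sum, Finset.sum_congr rfl hterm]
  by_cases hm : h' k = m
  · have hiff : ∀ f ∈ (E.pbw.repr c).support,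
        (f + Pi.single k m = h') ↔ (f = Function.update h' k 0) := by
      intro f hf
      have hfk : f k = 0 := hc.2 f (Finsupp.mem_support_iff.1 hf) k le_rfl
      constructor
      · rintro rfl
        funext l
        by_cases hl : l = k
        · subst hl; simp [Function.update_self, hfk]
        · simp [Function.update_of_ne hl, Pi.single_eq_of_ne hl]
      · rintro rfl
        funext l
        by_cases hl : l = k
        · subst hl; simp [Function.update_self, hm]
        · simp [Function.update_of_ne hl, Pi.single_eq_of_ne hl]
    rw [Finset.sum_congr rfl (fun f hf => by rw [if_congr (hiff f hf) rfl rfl]),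
      Finset.sum_ite_eq' _ (Function.update h' k 0) (fun f => E.pbw.repr c f), if_pos hm]
    split
    · rfl
    · next hns => exact (Finsupp.notMem_support_iff.1 hns).symm
  · rw [if_neg hm]
    refine Finset.sum_eq_zero (fun f hf => ?_)
    have hfk : f k = 0 := hc.2 f (Finsupp.mem_support_iff.1 hf) k le_rfl
    rw [if_neg]
    intro hcon
    apply hm
    have := congrFun hcon k
    simp [hfk] at this
    omega

end Aux2

section Aux3

variable {K : Type} [Field K] {R : Type} [Ring R] [Algebra K R] {N : ℕ}
variable (E : CGLExt K R N) (D : Subring K)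

/-- Lower-order terms: sums of `c * x_k^{i'}` with `c` of level `< k` and `i' < m`. -/
def lowD (k : Fin N) (m : ℕ) : AddSubgroup R :=
  AddSubgroup.closure {r | ∃ c : R, ∃ i' : ℕ, c ∈ okc E D (k : ℕ) ∧ i' < m ∧ r = c * E.x k ^ i'}

lemma lowD_coords {k : Fin N} {m : ℕ} {r : R} (hr : r ∈ lowD E D k m) :
    (∀ h, E.pbw.repr r h ∈ D) ∧
      (∀ h, E.pbw.repr r h ≠ 0 → h k < m ∧ ∀ l : Fin N, (k : ℕ) < (l : ℕ) → h l = 0) := by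
  induction hr using AddSubgroup.closure_induction with
  | mem r hr =>
    obtain ⟨c, i', hc, hi', rfl⟩ := hr
    constructor
    · intro h
      rw [shift_coords E D hc i' h]
      split
      · exact hc.1 _
      · exact zero_mem _
    · intro h hne
      rw [shift_coords E D hc i' h] at hne
      split at hne
      · next heq =>
        refine ⟨heq ▸ hi', fun l hl => ?_⟩
        have := hc.2 _ hne l (le_of_lt hl)
        rwa [Function.update_of_ne (fun hc' => by subst hc'; omega)] at this
      · exact absurd rfl hne
  | zero =>
    refine ⟨fun h => ?_, fun h hne => ?_⟩
    · rw [map_zero]; simpa using zero_mem D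
    · rw [map_zero] at hne; simp at hne
  | add a b _ _ iha ihb =>
    constructor
    · intro h; rw [map_add, Finsupp.add_apply]; exact add_mem (iha.1 h) (ihb.1 h)
    · intro h hne
      rw [map_add, Finsupp.add_apply] at hne
      by_cases ha : E.pbw.repr a h = 0
      · exact ihb.2 h (fun h' => hne (by rw [ha, h', add_zero]))
      · exact iha.2 h ha
  | neg a _ iha =>
    constructor
    · intro h; rw [map_neg, Finsupp.neg_apply]; exact neg_mem (iha.1 h)
    · intro h hne
      rw [map_neg, Finsupp.neg_apply, neg_ne_zero] at hne
      exact iha.2 h hne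

lemma lowD_mul_left {k : Fin N} {m : ℕ} {a r : R}
    (hmul : ∀ a b : R, a ∈ okc E D (k : ℕ) → b ∈ okc E D (k : ℕ) → a * b ∈ okc E D (k : ℕ))
    (ha : a ∈ okc E D (k : ℕ)) (hr : r ∈ lowD E D k m) : a * r ∈ lowD E D k m := by
  induction hr using AddSubgroup.closure_induction with
  | mem r hr =>
    obtain ⟨c, i', hc, hi', rfl⟩ := hr
    rw [← mul_assoc]
    exact AddSubgroup.subset_closure ⟨a * c, i', hmul a c ha hc, hi', rfl⟩
  | zero => rw [mul_zero]; exact zero_mem _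
  | add b c _ _ ihb ihc => rw [mul_add]; exact add_mem ihb ihc
  | neg b _ ihb => rw [mul_neg]; exact neg_mem ihb

lemma lowD_mul_xpow {k : Fin N} {m : ℕ} {r : R} (hr : r ∈ lowD E D k m) (j : ℕ) :
    r * E.x k ^ j ∈ lowD E D k (m + j) := by
  induction hr using AddSubgroup.closure_induction with
  | mem r hr =>
    obtain ⟨c, i', hc, hi', rfl⟩ := hr
    rw [mul_assoc, ← pow_add]
    exact AddSubgroup.subset_closure ⟨c, i' + j, hc, by omega, rfl⟩
  | zero => rw [zero_mul]; exact zero_mem _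
  | add b c _ _ ihb ihc => rw [add_mul]; exact add_mem ihb ihc
  | neg b _ ihb => rw [neg_mul]; exact neg_mem ihb

lemma lowD_xmul {k : Fin N} {m : ℕ} {r : R} (hD : IsDForm D E)
    (HL : ∀ s ∈ DRk K D E.x (k : ℕ), s ∈ okc E D (k : ℕ))
    (hlamD : ∀ j : Fin N, (j : ℕ) < (k : ℕ) → ((E.lamM k j : Kˣ) : K) ∈ D)
    (hr : r ∈ lowD E D k m) : E.x k * r ∈ lowD E D k (m + 1) := by
  induction hr using AddSubgroup.closure_induction with
  | mem r hr =>
    obtain ⟨c, i', hc, hi', rfl⟩ := hr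
    rw [← mul_assoc, E.ore k c (okc_mem_Rk E D hc), add_mul, mul_assoc, ← pow_succ']
    refine add_mem (AddSubgroup.subset_closure ⟨E.θ k c, i' + 1, theta_okc E D hlamD hc, by omega, rfl⟩)
      (AddSubgroup.subset_closure ⟨E.δ k c, i', delta_okc E D hD HL hc, by omega, rfl⟩)
  | zero => rw [mul_zero]; exact zero_mem _
  | add b c _ _ ihb ihc => rw [mul_add]; exact add_mem ihb ihc
  | neg b _ ihb => rw [mul_neg]; exact neg_mem ihb

lemma lowD_smul {k : Fin N} {m : ℕ} {r : R} {c : K} (hc : c ∈ D) (hr : r ∈ lowD E D k m) :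
    c • r ∈ lowD E D k m := by
  induction hr using AddSubgroup.closure_induction with
  | mem r hr =>
    obtain ⟨c', i', hc', hi', rfl⟩ := hr
    rw [← smul_mul_assoc]
    exact AddSubgroup.subset_closure ⟨c • c', i', okc_smul E D hc hc', hi', rfl⟩
  | zero => rw [smul_zero]; exact zero_mem _
  | add b c' _ _ ihb ihc => rw [smul_add]; exact add_mem ihb ihc
  | neg b _ ihb => rw [smul_neg]; exact neg_mem ihb

lemma xpow_mul_pbw (hD : IsDForm D E) (k : Fin N)
    (HL : ∀ s ∈ DRk K D E.x (k : ℕ), s ∈ okc E D (k : ℕ))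
    (hlamD : ∀ j : Fin N, (j : ℕ) < (k : ℕ) → ((E.lamM k j : Kˣ) : K) ∈ D)
    {g₀ : Fin N → ℕ} (hg : ∀ l : Fin N, (k : ℕ) ≤ (l : ℕ) → g₀ l = 0) (i : ℕ) :
    ∃ r ∈ lowD E D k i,
      E.x k ^ i * E.pbw g₀ = (LamK E k g₀) ^ i • (E.pbw g₀ * E.x k ^ i) + r := by
  induction i with
  | zero =>
    refine ⟨0, zero_mem _, ?_⟩
    rw [pow_zero, pow_zero, one_mul, mul_one, one_smul, add_zero]
  | succ i ih =>
    obtain ⟨r, hrm, hre⟩ := ih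
    have hδokc : E.δ k (E.pbw g₀) ∈ okc E D (k : ℕ) :=
      delta_okc E D hD HL (okc_pbw E D hg)
    have hΛD : (LamK E k g₀) ^ i ∈ D := by
      refine pow_mem (LamK_mem E D (fun j hj => hlamD j ?_)) _
      by_contra hcon
      exact hj (hg j (le_of_not_gt hcon))
    refine ⟨(LamK E k g₀) ^ i • (E.δ k (E.pbw g₀) * E.x k ^ i) + E.x k * r,
      add_mem (lowD_smul E D hΛD
        (AddSubgroup.subset_closure ⟨E.δ k (E.pbw g₀), i, hδokc, Nat.lt_succ_self i, rfl⟩))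
        (lowD_xmul E D hD HL hlamD hrm), ?_⟩
    have hore := E.ore k (E.pbw g₀) (pbw_mem_Rk E hg)
    have hθ := theta_pbw E k hg
    calc E.x k ^ (i + 1) * E.pbw g₀
        = E.x k * (E.x k ^ i * E.pbw g₀) := by rw [pow_succ', mul_assoc]
      _ = E.x k * ((LamK E k g₀) ^ i • (E.pbw g₀ * E.x k ^ i) + r) := by rw [hre]
      _ = (LamK E k g₀) ^ i • (E.x k * (E.pbw g₀ * E.x k ^ i)) + E.x k * r := by
          rw [mul_add, mul_smul_comm]
      _ = (LamK E k g₀) ^ i • ((E.θ k (E.pbw g₀) * E.x k + E.δ k (E.pbw g₀)) * E.x k ^ i)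
            + E.x k * r := by rw [← mul_assoc, hore]
      _ = (LamK E k g₀) ^ i • ((LamK E k g₀ • E.pbw g₀) * (E.x k * E.x k ^ i))
            + ((LamK E k g₀) ^ i • (E.δ k (E.pbw g₀) * E.x k ^ i) + E.x k * r) := by
          rw [hθ, add_mul, smul_add, mul_assoc]
          rw [add_assoc]
      _ = (LamK E k g₀) ^ (i + 1) • (E.pbw g₀ * E.x k ^ (i + 1))
            + ((LamK E k g₀) ^ i • (E.δ k (E.pbw g₀) * E.x k ^ i) + E.x k * r) := by
          rw [smul_mul_assoc, smul_smul, ← pow_succ, ← pow_succ']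

end Aux3

section Aux4

variable {K : Type} [Field K] {R : Type} [Ring R] [Algebra K R] {N : ℕ}
variable (E : CGLExt K R N) (D : Subring K)

/-- Statement: products of monomials of level `< k` have unit leading coefficient (in `D`)
and lower-order terms with coefficients in `D`. -/
def Bst (k : ℕ) : Prop :=
  ∀ f g : Fin N → ℕ, (∀ l : Fin N, k ≤ (l : ℕ) → f l = 0) →
    (∀ l : Fin N, k ≤ (l : ℕ) → g l = 0) →
    ∃ t : K, isUnitIn K D t ∧ ∃ r : R,
      E.pbw f * E.pbw g = t • E.pbw (f + g) + r ∧
      (∀ h, E.pbw.repr r h ∈ D) ∧ ∀ h, E.pbw.repr r h ≠ 0 → revLexLt h (f + g)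

lemma mul_okc {k : ℕ} (hB : Bst E D k) {a b : R} (ha : a ∈ okc E D k) (hb : b ∈ okc E D k) :
    a * b ∈ okc E D k := by
  have hexp : a * b = (E.pbw.repr a).sum fun f c => c • (E.pbw f * b) := by
    conv_lhs => rw [← repr_sum_eq E a]
    rw [Finsupp.sum_mul]
    exact Finsupp.sum_congr (fun f _ => smul_mul_assoc _ _ _)
  rw [hexp]
  refine okc_finsuppSum E D _ _ (fun f hf => okc_smul E D (ha.1 f) ?_)
  have hfs := ha.2 f (Finsupp.mem_support_iff.1 hf)
  have hexp2 : E.pbw f * b = (E.pbw.repr b).sum fun g d => d • (E.pbw f * E.pbw g) := by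
    conv_lhs => rw [← repr_sum_eq E b]
    rw [Finsupp.mul_sum]
    exact Finsupp.sum_congr (fun g _ => (mul_smul_comm _ _ _))
  rw [hexp2]
  refine okc_finsuppSum E D _ _ (fun g hg => okc_smul E D (hb.1 g) ?_)
  have hgs := hb.2 g (Finsupp.mem_support_iff.1 hg)
  obtain ⟨t, htu, r, hre, hrD, hrlt⟩ := hB f g hfs hgs
  rw [hre]
  have hsupp : ∀ l : Fin N, k ≤ (l : ℕ) → (f + g) l = 0 := fun l hl => by
    simp [hfs l hl, hgs l hl]
  exact add_mem (okc_smul E D htu.1 (okc_pbw E D hsupp))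
    ⟨hrD, fun h hne => revLex_zero_high (hrlt h hne) hsupp⟩

lemma lam_mem (hD : IsDForm D E) {k : ℕ} (hk : k < N)
    (HL : ∀ s ∈ DRk K D E.x k, s ∈ okc E D k) (j : Fin N) (hj : (j : ℕ) < k) :
    ((E.lamM ⟨k, hk⟩ j : Kˣ) : K) ∈ D ∧ (((E.lamM ⟨k, hk⟩ j)⁻¹ : Kˣ) : K) ∈ D := by
  set kF : Fin N := ⟨k, hk⟩ with hkF
  have hjk : (j : ℕ) < (kF : ℕ) := hj
  have hxR : E.x j ∈ Rk K E.x k := Algebra.subset_adjoin ⟨j, hj, rfl⟩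
  have hxD : E.x j ∈ DRk K D E.x k := Subring.subset_closure (Or.inr ⟨j, hj, rfl⟩)
  have hθx : E.θ kF (E.x j) = ((E.lamM kF j : Kˣ) : K) • E.x j := by
    rw [← E.hElt_theta kF (E.x j) hxR, E.lamM_spec kF j hjk]
  have hcoord : ∀ c : K, (E.pbw.repr (c • E.x j)) (Pi.single j 1) = c := by
    intro c
    rw [map_smul, ← pbw_single E j, E.pbw.repr_self, Finsupp.smul_apply, Finsupp.single_apply,
      if_pos rfl, smul_eq_mul, mul_one]
  constructor
  · have hmem := HL _ (hD.theta_mem kF (E.x j) hxR hxD)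
    have := hmem.1 (Pi.single j 1)
    rwa [hθx, hcoord] at this
  · have hθ0 : E.θ kF (0 : R) = 0 := by
      have h0 := E.θ_linear kF 1 0 (zero_mem _) 0 (zero_mem _)
      simp only [smul_zero, add_zero, one_smul] at h0
      exact add_eq_left.1 h0.symm
    have hvR : (((E.lamM kF j)⁻¹ : Kˣ) : K) • E.x j ∈ Rk K E.x k :=
      Subalgebra.smul_mem _ hxR _
    have hθv : E.θ kF ((((E.lamM kF j)⁻¹ : Kˣ) : K) • E.x j) = E.x j := by
      have hlin := E.θ_linear kF (((E.lamM kF j)⁻¹ : Kˣ) : K) (E.x j) hxR 0 (zero_mem _)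
      rw [add_zero, hθ0, add_zero] at hlin
      rw [hlin, hθx, smul_smul]
      norm_cast
      rw [inv_mul_cancel, Units.val_one, one_smul]
    have hinvx : E.θinv kF (E.x j) = (((E.lamM kF j)⁻¹ : Kˣ) : K) • E.x j := by
      conv_lhs => rw [← hθv]
      exact E.θ_left_inv kF _ hvR
    have hmem := HL _ (hD.thetainv_mem kF (E.x j) hxR hxD)
    rw [hinvx] at hmem
    have := hmem.1 (Pi.single j 1)
    rwa [hcoord] at this

theorem master (hD : IsDForm D E) :
    ∀ k : ℕ, Bst E D k ∧ ∀ s ∈ DRk K D E.x k, s ∈ okc E D k := by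
  intro k
  induction k with
  | zero =>
    have hB : Bst E D 0 := by
      intro f g hf hg
      have hf0 : f = 0 := funext fun l => hf l (Nat.zero_le _)
      have hg0 : g = 0 := funext fun l => hg l (Nat.zero_le _)
      subst hf0; subst hg0
      refine ⟨1, isUnitIn_one D, 0, ?_, fun h => by rw [map_zero]; simpa using zero_mem D,
        fun h hne => by rw [map_zero] at hne; simp at hne⟩
      simp [pbw_zero E]
    refine ⟨hB, fun s hs => ?_⟩
    induction hs using Subring.closure_induction with
    | mem r hr =>
      rcases hr with ⟨c, hc, rfl⟩ | ⟨i, hi, rfl⟩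
      · exact okc_algebraMap E D hc
      · exact absurd hi (by omega)
    | zero => exact zero_mem _
    | one => exact okc_one E D
    | add a b _ _ iha ihb => exact add_mem iha ihb
    | neg a _ iha => exact neg_mem iha
    | mul a b _ _ iha ihb => exact mul_okc E D hB iha ihb
  | succ k ih =>
    obtain ⟨hBk, hHk⟩ := ih
    have hBk1 : Bst E D (k + 1) := by
      intro f g hf hg
      by_cases hk : k < N
      · set kF : Fin N := ⟨k, hk⟩ with hkF
        have hkv : (kF : ℕ) = k := rfl
        have hlam := lam_mem E D hD hk hHk
        have hlamD : ∀ j : Fin N, (j : ℕ) < (kF : ℕ) → ((E.lamM kF j : Kˣ) : K) ∈ D :=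
          fun j hj => (hlam j hj).1
        set i := f kF with hidef
        set j := g kF with hjdef
        set f₀ := Function.update f kF 0 with hf₀def
        set g₀ := Function.update g kF 0 with hg₀def
        have hf₀ : ∀ l : Fin N, (kF : ℕ) ≤ (l : ℕ) → f₀ l = 0 := by
          intro l hl
          by_cases hc : l = kF
          · subst hc; simp [hf₀def]
          · rw [hf₀def, Function.update_of_ne hc]
            refine hf l ?_
            have : (l : ℕ) ≠ k := fun hcon => hc (Fin.ext hcon)
            rw [hkv] at hl
            omega
        have hg₀ : ∀ l : Fin N, (kF : ℕ) ≤ (l : ℕ) → g₀ l = 0 := by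
          intro l hl
          by_cases hc : l = kF
          · subst hc; simp [hg₀def]
          · rw [hg₀def, Function.update_of_ne hc]
            refine hg l ?_
            have : (l : ℕ) ≠ k := fun hcon => hc (Fin.ext hcon)
            rw [hkv] at hl
            omega
        have hfr : E.pbw f₀ * E.x kF ^ i = E.pbw f := by
          rw [pbw_mul_xpow E kF hf₀ i]
          congr 1
          funext l
          by_cases hc : l = kF
          · subst hc; simp [hf₀def, hidef]
          · simp [hf₀def, Function.update_of_ne hc, Pi.single_eq_of_ne hc]
        have hgr : E.pbw g₀ * E.x kF ^ j = E.pbw g := by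
          rw [pbw_mul_xpow E kF hg₀ j]
          congr 1
          funext l
          by_cases hc : l = kF
          · subst hc; simp [hg₀def, hjdef]
          · simp [hg₀def, Function.update_of_ne hc, Pi.single_eq_of_ne hc]
        obtain ⟨r₁, hr₁m, hr₁e⟩ := xpow_mul_pbw E D hD kF hHk hlamD hg₀ i
        obtain ⟨t₀, ht₀u, r₀, hr₀e, hr₀D, hr₀lt⟩ := hBk f₀ g₀ hf₀ hg₀
        set Λ := LamK E kF g₀ with hΛdef
        have hfg0supp : ∀ l : Fin N, k ≤ (l : ℕ) → (f₀ + g₀) l = 0 := fun l hl => by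
          simp [hf₀ l hl, hg₀ l hl]
        have hr₀okc : r₀ ∈ okc E D k :=
          ⟨hr₀D, fun h hne => revLex_zero_high (hr₀lt h hne) hfg0supp⟩
        have hfgsum : f₀ + g₀ + (Pi.single kF (i + j) : Fin N → ℕ) = f + g := by
          funext l
          by_cases hc : l = kF
          · subst hc; simp [hf₀def, hg₀def, hidef, hjdef]
          · simp [hf₀def, hg₀def, Function.update_of_ne hc, Pi.single_eq_of_ne hc]
        have hfgk : (f + g) kF = i + j := by simp [hidef, hjdef]
        have hfghigh : ∀ l : Fin N, k < (l : ℕ) → (f + g) l = 0 := fun l hl => by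
          have h1 : f l = 0 := hf l (by omega)
          have h2 : g l = 0 := hg l (by omega)
          simp [h1, h2]
        have hΛu : isUnitIn K D Λ := isUnitIn_LamK E D (fun j' hj' => hlam j' (by
          by_contra hcon
          exact hj' (hg₀ j' (le_of_not_gt hcon))))
        have hmulk : ∀ a b : R, a ∈ okc E D (kF : ℕ) → b ∈ okc E D (kF : ℕ) →
            a * b ∈ okc E D (kF : ℕ) := fun a b ha hb => mul_okc E D hBk ha hb
        have hs₂ : (E.pbw f₀ * r₁) * E.x kF ^ j ∈ lowD E D kF (i + j) := by
          have h1 : E.pbw f₀ * r₁ ∈ lowD E D kF i :=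
            lowD_mul_left E D hmulk (okc_pbw E D hf₀) hr₁m
          exact lowD_mul_xpow E D h1 j
        refine ⟨Λ ^ i * t₀, isUnitIn_mul D (isUnitIn_pow D hΛu i) ht₀u,
          Λ ^ i • (r₀ * E.x kF ^ (i + j)) + (E.pbw f₀ * r₁) * E.x kF ^ j, ?_, ?_, ?_⟩
        · calc E.pbw f * E.pbw g
              = (E.pbw f₀ * E.x kF ^ i) * (E.pbw g₀ * E.x kF ^ j) := by rw [hfr, hgr]
            _ = E.pbw f₀ * ((E.x kF ^ i * E.pbw g₀) * E.x kF ^ j) := by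
                rw [mul_assoc, ← mul_assoc (E.x kF ^ i)]
            _ = E.pbw f₀ * ((Λ ^ i • (E.pbw g₀ * E.x kF ^ i) + r₁) * E.x kF ^ j) := by
                rw [hr₁e]
            _ = E.pbw f₀ * (Λ ^ i • (E.pbw g₀ * E.x kF ^ i * E.x kF ^ j) + r₁ * E.x kF ^ j) := by
                rw [add_mul, smul_mul_assoc]
            _ = Λ ^ i • (E.pbw f₀ * (E.pbw g₀ * E.x kF ^ i * E.x kF ^ j))
                  + E.pbw f₀ * (r₁ * E.x kF ^ j) := by
                rw [mul_add, mul_smul_comm]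
            _ = Λ ^ i • (E.pbw f₀ * E.pbw g₀ * E.x kF ^ (i + j))
                  + (E.pbw f₀ * r₁) * E.x kF ^ j := by
                rw [mul_assoc (E.pbw g₀), ← pow_add, ← mul_assoc, ← mul_assoc]
            _ = Λ ^ i • ((t₀ • E.pbw (f₀ + g₀) + r₀) * E.x kF ^ (i + j))
                  + (E.pbw f₀ * r₁) * E.x kF ^ j := by rw [hr₀e]
            _ = Λ ^ i • (t₀ • (E.pbw (f₀ + g₀) * E.x kF ^ (i + j)) + r₀ * E.x kF ^ (i + j))
                  + (E.pbw f₀ * r₁) * E.x kF ^ j := by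
                rw [add_mul, smul_mul_assoc]
            _ = (Λ ^ i * t₀) • E.pbw (f + g)
                  + (Λ ^ i • (r₀ * E.x kF ^ (i + j)) + (E.pbw f₀ * r₁) * E.x kF ^ j) := by
                rw [pbw_mul_xpow E kF hfg0supp (i + j), hfgsum, smul_add, smul_smul, add_assoc]
        · intro h
          rw [map_add, Finsupp.add_apply]
          refine add_mem ?_ ((lowD_coords E D hs₂).1 h)
          rw [map_smul, Finsupp.smul_apply, smul_eq_mul]
          refine mul_mem (pow_mem hΛu.1 i) ?_
          rw [shift_coords E D hr₀okc (i + j) h]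
          split
          · exact hr₀D _
          · exact zero_mem _
        · intro h hne
          rw [map_add, Finsupp.add_apply] at hne
          by_cases h1 : E.pbw.repr (Λ ^ i • (r₀ * E.x kF ^ (i + j))) h = 0
          · have h2 : E.pbw.repr ((E.pbw f₀ * r₁) * E.x kF ^ j) h ≠ 0 := fun hz =>
              hne (by rw [h1, hz, add_zero])
            obtain ⟨hklt, hhigh⟩ := (lowD_coords E D hs₂).2 h h2
            refine ⟨kF, ?_, fun m hm => ?_⟩
            · rw [hfgk]
              exact hklt
            · rw [hhigh m hm, hfghigh m hm]
          · have h1' : E.pbw.repr (r₀ * E.x kF ^ (i + j)) h ≠ 0 := by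
              intro hz
              apply h1
              rw [map_smul, Finsupp.smul_apply, hz, smul_zero]
            rw [shift_coords E D hr₀okc (i + j) h] at h1'
            split at h1'
            · next hhk =>
              have hlt := hr₀lt _ h1'
              have hhsum : Function.update h kF 0 + (Pi.single kF (i + j) : Fin N → ℕ) = h := by
                funext l
                by_cases hc : l = kF
                · subst hc; simp [hhk]
                · simp [Function.update_of_ne hc, Pi.single_eq_of_ne hc]
              have hres := revLex_add_right hlt (Pi.single kF (i + j))
              rw [hhsum, hfgsum] at hres
              exact hres
            · exact absurd rfl h1'
      · refine hBk f g (fun l hl => ?_) (fun l hl => ?_)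
        · exact absurd hl (by have := l.isLt; omega)
        · exact absurd hl (by have := l.isLt; omega)
    have hH1 : ∀ s ∈ DRk K D E.x (k + 1), s ∈ okc E D (k + 1) := by
      intro s hs
      induction hs using Subring.closure_induction with
      | mem r hr =>
        rcases hr with ⟨c, hc, rfl⟩ | ⟨i, hi, rfl⟩
        · exact okc_algebraMap E D hc
        · exact okc_x E D hi
      | zero => exact zero_mem _
      | one => exact okc_one E D
      | add a b _ _ iha ihb => exact add_mem iha ihb
      | neg a _ iha => exact neg_mem iha
      | mul a b _ _ iha ihb => exact mul_okc E D hBk1 iha ihb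
    exact ⟨hBk1, hH1⟩

end Aux4

section Aux5

variable {K : Type} [Field K] {R : Type} [Ring R] [Algebra K R] {N : ℕ}
variable (E : CGLExt K R N) (D : Subring K)

lemma revLex_pair {f' f g' g : Fin N → ℕ} (h1 : f' = f ∨ revLexLt f' f)
    (h2 : g' = g ∨ revLexLt g' g) (hne : ¬(f' = f ∧ g' = g)) :
    revLexLt (f' + g') (f + g) := by
  rcases h1 with rfl | h1 <;> rcases h2 with rfl | h2
  · exact absurd ⟨rfl, rfl⟩ hne
  · have := revLex_add_right h2 f'
    rwa [add_comm g' f', add_comm g f'] at this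
  · exact revLex_add_right h1 g'
  · have ha := revLex_add_right h1 g'
    have hb := revLex_add_right h2 f
    rw [add_comm g' f, add_comm g f] at hb
    exact revLex_trans ha hb

lemma coord_mul_top (hD : IsDForm D E) (u v : R) (f g : Fin N → ℕ)
    (hu : ∀ f' ∈ (E.pbw.repr u).support, f' = f ∨ revLexLt f' f)
    (hv : ∀ g' ∈ (E.pbw.repr v).support, g' = g ∨ revLexLt g' g) :
    ∃ t : K, isUnitIn K D t ∧
      E.pbw.repr (u * v) (f + g) = t * (E.pbw.repr u f * E.pbw.repr v g) := by
  have hvac : ∀ h : Fin N → ℕ, ∀ l : Fin N, N ≤ (l : ℕ) → h l = 0 :=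
    fun h l hl => absurd hl (by have := l.isLt; omega)
  have hB := (master E D hD N).1
  obtain ⟨t, htu, r, hre, hrD, hrlt⟩ := hB f g (hvac f) (hvac g)
  refine ⟨t, htu, ?_⟩
  have hzero : ∀ f' g' : Fin N → ℕ, (f' = f ∨ revLexLt f' f) → (g' = g ∨ revLexLt g' g) →
      ¬(f' = f ∧ g' = g) → evalAt E (f + g) (E.pbw f' * E.pbw g') = 0 := by
    intro f' g' h1 h2 hne
    obtain ⟨t', _, r', hre', _, hrlt'⟩ := hB f' g' (hvac f') (hvac g')
    have hlt := revLex_pair h1 h2 hne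
    rw [hre', map_add, map_smul]
    have he1 : evalAt E (f + g) (E.pbw (f' + g')) = 0 := by
      rw [evalAt_apply, E.pbw.repr_self, Finsupp.single_apply,
        if_neg (show ¬(f' + g' = f + g) from fun hc => revLex_irrefl (f + g) (hc ▸ hlt))]
    have he2 : evalAt E (f + g) r' = 0 := by
      rw [evalAt_apply]
      by_contra hc
      exact revLex_irrefl _ (revLex_trans (hrlt' _ hc) hlt)
    rw [he1, he2, smul_zero, zero_add]
  have htop : evalAt E (f + g) (E.pbw f * E.pbw g) = t := by
    rw [hre, map_add, map_smul]
    have he1 : evalAt E (f + g) (E.pbw (f + g)) = 1 := by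
      rw [evalAt_apply, E.pbw.repr_self, Finsupp.single_apply, if_pos rfl]
    have he2 : evalAt E (f + g) r = 0 := by
      rw [evalAt_apply]
      by_contra hc
      exact revLex_irrefl _ (hrlt _ hc)
    rw [he1, he2, add_zero, smul_eq_mul, mul_one]
  have hinner : ∀ f' : Fin N → ℕ, evalAt E (f + g) (E.pbw f' * v) =
      (E.pbw.repr v).sum fun g' d => d * evalAt E (f + g) (E.pbw f' * E.pbw g') := by
    intro f'
    conv_lhs => rw [← repr_sum_eq E v]
    rw [Finsupp.mul_sum, map_finsuppSum]
    refine Finsupp.sum_congr (fun g' _ => ?_)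
    rw [mul_smul_comm, map_smul, smul_eq_mul]
  have houter : E.pbw.repr (u * v) (f + g) =
      (E.pbw.repr u).sum fun f' c => c * evalAt E (f + g) (E.pbw f' * v) := by
    rw [← evalAt_apply]
    conv_lhs => rw [← repr_sum_eq E u]
    rw [Finsupp.sum_mul, map_finsuppSum]
    refine Finsupp.sum_congr (fun f' _ => ?_)
    rw [smul_mul_assoc, map_smul, smul_eq_mul]
  have hsum1 : (E.pbw.repr u).sum (fun f' c => c * evalAt E (f + g) (E.pbw f' * v)) =
      E.pbw.repr u f * evalAt E (f + g) (E.pbw f * v) := by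
    rw [Finsupp.sum]
    refine Finset.sum_eq_single f (fun f' hf' hne => ?_) (fun hf => ?_)
    · rw [hinner f', Finsupp.sum, Finset.sum_eq_zero, mul_zero]
      intro g' hg'
      rw [hzero f' g' (hu f' hf') (hv g' hg') (fun hc => hne hc.1), mul_zero]
    · rw [Finsupp.notMem_support_iff.1 hf, zero_mul]
  have hsum2 : (E.pbw.repr v).sum (fun g' d => d * evalAt E (f + g) (E.pbw f * E.pbw g')) =
      E.pbw.repr v g * evalAt E (f + g) (E.pbw f * E.pbw g) := by
    rw [Finsupp.sum]
    refine Finset.sum_eq_single g (fun g' hg' hne => ?_) (fun hg => ?_)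
    · rw [hzero f g' (Or.inl rfl) (hv g' hg') (fun hc => hne hc.2), mul_zero]
    · rw [Finsupp.notMem_support_iff.1 hg, zero_mul]
  rw [houter, hsum1, hinner f, hsum2, htop]
  ring

lemma DRfull_le : DRfull K D E.x ≤ DRk K D E.x N := by
  refine Subring.closure_mono (Set.union_subset_union_right _ ?_)
  rintro r ⟨i, _, rfl⟩
  exact ⟨i, i.isLt, rfl⟩

end Aux5

/-- **Lemma (cancelling scalar divisors).** Let `R` be a CGL extension whose
presentation has a `D`-form `R_D = D⟨x_1,…,x_N⟩`. Let `d ∈ D \ {0}` and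
`u, v ∈ R_D \ {0}` with `d ∣ uv` in `R_D`. If the leading coefficient of `v` lies in
`D^×`, then `d ∣ u` in `R_D`. -/
theorem d_dvd_of_lc_unit {K : Type} [Field K] {R : Type} [Ring R] [Algebra K R] {N : ℕ}
    (E : CGLExt K R N) (D : Subring K) (hD : IsDForm D E)
    (d : K) (hdD : d ∈ D) (hd0 : d ≠ 0)
    (u v : R) (hu : u ∈ DRfull K D E.x) (hu0 : u ≠ 0)
    (hv : v ∈ DRfull K D E.x) (hv0 : v ≠ 0)
    (hdvd : ∃ w ∈ DRfull K D E.x, u * v = algebraMap K R d * w)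
    (hlc : ∃ (t : K) (f : Fin N → ℕ), IsLeadingTerm E v t f ∧ isUnitIn K D t) :
    ∃ w ∈ DRfull K D E.x, u = algebraMap K R d * w := by
  obtain ⟨s, g, ⟨hs0, hsrepr, hsupp⟩, hsu⟩ := hlc
  have Hfull : ∀ r ∈ DRfull K D E.x, r ∈ okc E D N := fun r hr =>
    (master E D hD N).2 r (DRfull_le E D hr)
  have main : ∀ n : ℕ, ∀ u' : R, u' ∈ DRfull K D E.x → (E.pbw.repr u').support.card ≤ n →
      (∃ w ∈ DRfull K D E.x, u' * v = algebraMap K R d * w) →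
      ∃ w ∈ DRfull K D E.x, u' = algebraMap K R d * w := by
    intro n
    induction n with
    | zero =>
      intro u' _ hcard _
      have hse : (E.pbw.repr u').support = ∅ := Finset.card_eq_zero.1 (Nat.le_zero.1 hcard)
      have hu0' : u' = 0 := by
        have h0 : E.pbw.repr u' = 0 := Finsupp.support_eq_empty.1 hse
        have := congrArg E.pbw.repr.symm h0
        rwa [LinearEquiv.symm_apply_apply, map_zero] at this
      exact ⟨0, zero_mem _, by rw [hu0', mul_zero]⟩
    | succ n ihn =>
      intro u' hu' hcard hdvd'
      by_cases hzero : (E.pbw.repr u').support = ∅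
      · have hu0' : u' = 0 := by
          have h0 : E.pbw.repr u' = 0 := Finsupp.support_eq_empty.1 hzero
          have := congrArg E.pbw.repr.symm h0
          rwa [LinearEquiv.symm_apply_apply, map_zero] at this
        exact ⟨0, zero_mem _, by rw [hu0', mul_zero]⟩
      · obtain ⟨f, hfs, hfmax⟩ := exists_revLex_max _ (Finset.nonempty_of_ne_empty hzero)
        obtain ⟨w, hw, hweq⟩ := hdvd'
        set tu := E.pbw.repr u' f with htudef
        have htu0 : tu ≠ 0 := Finsupp.mem_support_iff.1 hfs
        obtain ⟨t₀, ht₀u, hcoord⟩ := coord_mul_top E D hD u' v f g hfmax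
          (fun g' hg' => hsupp g' (Finsupp.mem_support_iff.1 hg'))
        have hsm : u' * v = d • w := by rw [hweq, Algebra.smul_def]
        have hwD : E.pbw.repr w (f + g) ∈ D := (Hfull w hw).1 _
        have hdco : E.pbw.repr (u' * v) (f + g) = d * E.pbw.repr w (f + g) := by
          rw [hsm, map_smul, Finsupp.smul_apply, smul_eq_mul]
        set e := t₀⁻¹ * s⁻¹ * E.pbw.repr w (f + g) with hedef
        have heD : e ∈ D := mul_mem (mul_mem ht₀u.2.2 hsu.2.2) hwD
        have h1 : t₀ * (tu * s) = d * E.pbw.repr w (f + g) := by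
          rw [← hsrepr, htudef, ← hcoord]
          exact hdco
        have htue : tu = d * e := by
          have ht0ne : t₀ ≠ 0 := ht₀u.2.1
          have hsne : s ≠ 0 := hsu.2.1
          rw [hedef]
          field_simp
          linear_combination h1
        have htuD : tu ∈ D := (Hfull u' hu').1 f
        have hpbwD : E.pbw f ∈ DRfull K D E.x := by
          rw [E.pbw_eq]
          exact oMono_mem_Dspan D E.x _ f (fun _ _ => trivial)
        set u'' := u' - algebraMap K R tu * E.pbw f with hu''def
        have hu''mem : u'' ∈ DRfull K D E.x :=
          sub_mem hu' (mul_mem (Subring.subset_closure (Or.inl ⟨tu, htuD, rfl⟩)) hpbwD)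
        have hrepru'' : E.pbw.repr u'' = E.pbw.repr u' - Finsupp.single f tu := by
          rw [hu''def, map_sub]
          congr 1
          rw [← Algebra.smul_def, map_smul, E.pbw.repr_self, Finsupp.smul_single, smul_eq_mul,
            mul_one]
        have hsupp'' : (E.pbw.repr u'').support ⊆ (E.pbw.repr u').support.erase f := by
          intro h hh
          rw [Finsupp.mem_support_iff, hrepru'', Finsupp.sub_apply, Finsupp.single_apply] at hh
          rw [Finset.mem_erase, Finsupp.mem_support_iff]
          by_cases hc : h = f
          · subst hc
            rw [if_pos rfl, ← htudef, sub_self] at hh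
            exact absurd rfl hh
          · rw [if_neg (Ne.symm hc), sub_zero] at hh
            exact ⟨hc, hh⟩
        have hcard'' : (E.pbw.repr u'').support.card ≤ n := by
          have hle := Finset.card_le_card hsupp''
          have hlt := Finset.card_erase_lt_of_mem hfs
          omega
        have hdvd'' : ∃ w'' ∈ DRfull K D E.x, u'' * v = algebraMap K R d * w'' := by
          refine ⟨w - algebraMap K R e * (E.pbw f * v),
            sub_mem hw (mul_mem (Subring.subset_closure (Or.inl ⟨e, heD, rfl⟩))
              (mul_mem hpbwD hv)), ?_⟩
          rw [hu''def, sub_mul, hweq, mul_sub]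
          congr 1
          rw [htue, map_mul, mul_assoc, mul_assoc]
        obtain ⟨w₂, hw₂, hw₂eq⟩ := ihn u'' hu''mem hcard'' hdvd''
        refine ⟨w₂ + algebraMap K R e * E.pbw f,
          add_mem hw₂ (mul_mem (Subring.subset_closure (Or.inl ⟨e, heD, rfl⟩)) hpbwD), ?_⟩
        have hback : u' = u'' + algebraMap K R tu * E.pbw f := by
          rw [hu''def, sub_add_cancel]
        rw [hback, hw₂eq, htue, map_mul, mul_add, mul_assoc]
  exact main _ u hu le_rfl hdvd

end GYint
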